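/- Let L be a Lie algebra over a field k and let 𝔤, 𝔟 be Lie subalgebras of L whose underlying submodules are complementary (L = 𝔤 ⊕ 𝔟 as a vector space). Let π_𝔤 and π_𝔟 denote the linear projections of L onto 𝔤 and 𝔟 associated with this decomposition, and set R = π_𝔟 − π_𝔤 (an endomorphism of L). Then R satisfies the modified classical Yang–Baxter equation: for all x, y ∈ L, ⁅R(x), R(y)⁆ = R(⁅R(x), y⁆ + ⁅x, R(y)⁆) − ⁅x, y⁆. -/

import Mathlib

/-- if a Lie algebra `L` over a field `k` decomposes as a vector space
into complementary Lie subalgebras `𝔤` and `𝔟`, then `R = π_𝔟 − π_𝔤` satisfies the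
modified classical Yang–Baxter equation
`⁅R x, R y⁆ = R (⁅R x, y⁆ + ⁅x, R y⁆) − ⁅x, y⁆`. -/
theorem projection_difference_satisfies_mcybe
    {k L : Type*} [Field k] [LieRing L] [LieAlgebra k L]
    (g b : LieSubalgebra k L)
    (h : IsCompl g.toSubmodule b.toSubmodule)
    (R : L →ₗ[k] L)
    (hR : R =
      b.toSubmodule.subtype ∘ₗ
          Submodule.linearProjOfIsCompl b.toSubmodule g.toSubmodule h.symm -
        g.toSubmodule.subtype ∘ₗ
          Submodule.linearProjOfIsCompl g.toSubmodule b.toSubmodule h)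
    (x y : L) :
    ⁅R x, R y⁆ = R (⁅R x, y⁆ + ⁅x, R y⁆) - ⁅x, y⁆ := by
  have hg : ∀ u ∈ g.toSubmodule, R u = -u := by
    intro u hu
    rw [hR]
    have h1 : (⟨u, hu⟩ : g.toSubmodule) = g.toSubmodule.linearProjOfIsCompl b.toSubmodule h u :=
      (Submodule.linearProjOfIsCompl_apply_left h ⟨u, hu⟩).symm
    simp [← h1, (show Submodule.linearProjOfIsCompl b.toSubmodule g.toSubmodule h.symm u = 0 from
      Submodule.projectionOnto_apply_of_mem_right h.symm hu)]
  have hb : ∀ v ∈ b.toSubmodule, R v = v := by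
    intro v hv
    rw [hR]
    have h1 : (⟨v, hv⟩ : b.toSubmodule) = b.toSubmodule.linearProjOfIsCompl g.toSubmodule h.symm v :=
      (Submodule.linearProjOfIsCompl_apply_left h.symm ⟨v, hv⟩).symm
    simp [← h1, (show Submodule.linearProjOfIsCompl g.toSubmodule b.toSubmodule h v = 0 from
      Submodule.projectionOnto_apply_of_mem_right h hv)]
  set px : L := (Submodule.linearProjOfIsCompl g.toSubmodule b.toSubmodule h x : L) with hpx
  set qx : L := (Submodule.linearProjOfIsCompl b.toSubmodule g.toSubmodule h.symm x : L) with hqx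
  set py : L := (Submodule.linearProjOfIsCompl g.toSubmodule b.toSubmodule h y : L) with hpy
  set qy : L := (Submodule.linearProjOfIsCompl b.toSubmodule g.toSubmodule h.symm y : L) with hqy
  have hpxg : px ∈ g.toSubmodule := Submodule.coe_mem _
  have hpyg : py ∈ g.toSubmodule := Submodule.coe_mem _
  have hqxb : qx ∈ b.toSubmodule := Submodule.coe_mem _
  have hqyb : qy ∈ b.toSubmodule := Submodule.coe_mem _
  have hxd : x = px + qx :=
    (Submodule.projection_add_projection_eq_self h x).symm
  have hyd : y = py + qy :=
    (Submodule.projection_add_projection_eq_self h y).symm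
  have hRx : R x = qx - px := by rw [hR]; simp [hpx, hqx, sub_eq_add_neg]
  have hRy : R y = qy - py := by rw [hR]; simp [hpy, hqy, sub_eq_add_neg]
  have hpp : ⁅px, py⁆ ∈ g.toSubmodule := g.lie_mem hpxg hpyg
  have hqq : ⁅qx, qy⁆ ∈ b.toSubmodule := b.lie_mem hqxb hqyb
  have harg : ⁅R x, y⁆ + ⁅x, R y⁆ = (⁅qx, qy⁆ + ⁅qx, qy⁆) - (⁅px, py⁆ + ⁅px, py⁆) := by
    rw [hRx, hRy, hxd, hyd]
    simp only [add_lie, lie_add, sub_lie, lie_sub]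
    abel
  calc ⁅R x, R y⁆ = ⁅qx, qy⁆ - ⁅qx, py⁆ - ⁅px, qy⁆ + ⁅px, py⁆ := by
        rw [hRx, hRy]; simp only [sub_lie, lie_sub]; abel
    _ = R (⁅R x, y⁆ + ⁅x, R y⁆) - ⁅x, y⁆ := by
        rw [harg, map_sub, map_add, map_add, hb _ hqq, hg _ hpp, hxd, hyd]
        simp only [add_lie, lie_add]
        abel
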